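/- Let H be a complex Hilbert space and let M : H → H be a bounded linear operator with a decomposition M = M₀ + K, where M₀ is sign-definite (either M₀ or −M₀ is self-adjoint with ⟨φ, M₀φ⟩ ≥ c‖φ‖² for some c > 0 and all φ) and K is compact. If Im⟨φ, Mφ⟩ ≠ 0 for every φ ≠ 0, then M is coercive (there exists c' > 0 with |⟨φ, Mφ⟩| ≥ c'‖φ‖² for all φ), and M is bijective with bounded inverse. -/

import Mathlib

open scoped ComplexInnerProductSpace
open ContinuousLinearMap

/-- A bounded operator `C` on a complex Hilbert space is positive (in the sense of
the paper) if it is self-adjoint and there exists `c > 0` with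
`⟪φ, C φ⟫ ≥ c ‖φ‖²` for all `φ`. -/
def IsPositiveOp {H : Type*} [NormedAddCommGroup H] [InnerProductSpace ℂ H]
    [CompleteSpace H] (C : H →L[ℂ] H) : Prop :=
  IsSelfAdjoint C ∧ ∃ c > (0 : ℝ), ∀ φ : H, c * ‖φ‖ ^ 2 ≤ (⟪φ, C φ⟫).re

/-- `C` is sign-definite if either `C` or `-C` is positive. -/
def IsSignDefiniteOp {H : Type*} [NormedAddCommGroup H] [InnerProductSpace ℂ H]
    [CompleteSpace H] (C : H →L[ℂ] H) : Prop :=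
  IsPositiveOp C ∨ IsPositiveOp (-C)


open Filter Topology
open scoped NNReal

section Aux

variable {H : Type*} [NormedAddCommGroup H] [InnerProductSpace ℂ H] [CompleteSpace H]

/-- For a self-adjoint operator the quadratic form is real. -/
lemma aux_im_inner_self_eq_zero {A : H →L[ℂ] H} (hA : IsSelfAdjoint A) (x : H) :
    (⟪x, A x⟫).im = 0 := by
  have h1 : ⟪A x, x⟫ = ⟪x, A x⟫ := by
    conv_lhs => rw [← (ContinuousLinearMap.isSelfAdjoint_iff'.mp hA)]
    rw [ContinuousLinearMap.adjoint_inner_left]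
  have h2 : (starRingEnd ℂ) ⟪x, A x⟫ = ⟪x, A x⟫ := by
    rw [inner_conj_symm]; exact h1
  exact Complex.conj_eq_iff_im.mp h2

/-- Weak limit of a bounded sequence along an ultrafilter. -/
lemma aux_exists_weak_limit (U : Ultrafilter ℕ) (u : ℕ → H) (hu : ∀ n, ‖u n‖ = 1) :
    ∃ φ : H, ∀ y : H, Tendsto (fun n => ⟪u n, y⟫) ↑U (𝓝 ⟪φ, y⟫) := by
  have hbd : ∀ (y : H) (n : ℕ), ‖⟪u n, y⟫‖ ≤ ‖y‖ := by
    intro y n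
    calc ‖⟪u n, y⟫‖ ≤ ‖u n‖ * ‖y‖ := norm_inner_le_norm _ _
    _ = ‖y‖ := by rw [hu n, one_mul]
  have h1 : ∀ y : H, ∃ z : ℂ, Tendsto (fun n => ⟪u n, y⟫) ↑U (𝓝 z) := by
    intro y
    obtain ⟨z, _, hz⟩ := (isCompact_closedBall (0 : ℂ) ‖y‖).ultrafilter_le_nhds
      (U.map fun n => ⟪u n, y⟫) (by
        rw [Ultrafilter.coe_map, Filter.le_principal_iff, Filter.mem_map]
        refine Filter.univ_mem' fun n => ?_
        simpa [Metric.mem_closedBall, dist_eq_norm] using hbd y n)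
    exact ⟨z, by rwa [Ultrafilter.coe_map] at hz⟩
  choose g hg using h1
  have hadd : ∀ y z : H, g (y + z) = g y + g z := by
    intro y z
    refine tendsto_nhds_unique (hg (y + z)) ?_
    have := (hg y).add (hg z)
    simpa [inner_add_right] using this
  have hsmul : ∀ (c : ℂ) (y : H), g (c • y) = c • g y := by
    intro c y
    refine tendsto_nhds_unique (hg (c • y)) ?_
    have := (hg y).const_mul c
    simpa [inner_smul_right, smul_eq_mul] using this
  let f : H →ₗ[ℂ] ℂ := { toFun := g, map_add' := hadd, map_smul' := hsmul }
  have hbound : ∀ y : H, ‖f y‖ ≤ 1 * ‖y‖ := by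
    intro y
    refine le_of_tendsto (hg y).norm (Filter.Eventually.of_forall fun n => ?_)
    simpa using hbd y n
  let F : H →L[ℂ] ℂ := f.mkContinuous 1 hbound
  refine ⟨(InnerProductSpace.toDual ℂ H).symm F, fun y => ?_⟩
  have : ⟪(InnerProductSpace.toDual ℂ H).symm F, y⟫ = F y :=
    InnerProductSpace.toDual_symm_apply
  rw [this]
  exact hg y

/-- Strong limit of the images of a bounded sequence under a compact operator,
along an ultrafilter. -/
lemma aux_exists_compact_limit (U : Ultrafilter ℕ) {K : H →L[ℂ] H}
    (hK : IsCompactOperator (⇑K)) (u : ℕ → H) (hu : ∀ n, ‖u n‖ = 1) :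
    ∃ ψ : H, Tendsto (fun n => K (u n)) ↑U (𝓝 ψ) := by
  obtain ⟨C, hC, hmem⟩ := hK
  obtain ⟨ε, hε, hball⟩ := Metric.mem_nhds_iff.mp hmem
  set a : ℝ := ε / 2 with ha
  have ha0 : 0 < a := by positivity
  have hmemC : ∀ n, K ((a : ℂ) • u n) ∈ C := by
    intro n
    apply hball
    simp only [Metric.mem_ball, dist_zero_right, norm_smul, hu n, mul_one,
      Complex.norm_real]
    rw [Real.norm_eq_abs, abs_of_pos ha0]
    linarith
  obtain ⟨ψ', _, hψ'⟩ := hC.ultrafilter_le_nhds (U.map fun n => K ((a : ℂ) • u n)) (by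
    rw [Ultrafilter.coe_map, Filter.le_principal_iff, Filter.mem_map]
    exact Filter.univ_mem' fun n => hmemC n)
  rw [Ultrafilter.coe_map] at hψ'
  refine ⟨(a : ℂ)⁻¹ • ψ', ?_⟩
  have h2 := Filter.Tendsto.const_smul (show Tendsto (fun n => K ((a : ℂ) • u n)) ↑U (𝓝 ψ') from hψ') ((a : ℂ)⁻¹)
  have heq : (fun n => K (u n)) = fun n => (a : ℂ)⁻¹ • K ((a : ℂ) • u n) := by
    funext n
    rw [map_smul, smul_smul, inv_mul_cancel₀ (by exact_mod_cast ne_of_gt ha0), one_smul]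
  rw [heq]
  exact h2

theorem aux_coercive_of_pos (M M₀ K : H →L[ℂ] H) (hsum : M = M₀ + K)
    (hpos : IsPositiveOp M₀) (hK : IsCompactOperator (⇑K))
    (hIm : ∀ φ : H, φ ≠ 0 → (⟪φ, M φ⟫).im ≠ 0) :
    ∃ c' > (0 : ℝ), ∀ φ : H, c' * ‖φ‖ ^ 2 ≤ ‖⟪φ, M φ⟫‖ := by
  obtain ⟨hsa, c, hc, hlow⟩ := hpos
  by_contra hcon
  push_neg at hcon
  -- produce a unit sequence with quadratic form tending to 0
  have key : ∀ ε : ℝ, 0 < ε → ∃ ψ : H, ‖ψ‖ = 1 ∧ ‖⟪ψ, M ψ⟫‖ < ε := by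
    intro ε hε
    obtain ⟨φ, hφ⟩ := hcon ε hε
    have hφ0 : φ ≠ 0 := by
      rintro rfl
      simp at hφ
    have hn : (0 : ℝ) < ‖φ‖ := norm_pos_iff.mpr hφ0
    refine ⟨((‖φ‖⁻¹ : ℝ) : ℂ) • φ, ?_, ?_⟩
    · rw [norm_smul, Complex.norm_real, Real.norm_eq_abs, abs_of_pos (by positivity)]
      field_simp
    · have hM : M (((‖φ‖⁻¹ : ℝ) : ℂ) • φ) = ((‖φ‖⁻¹ : ℝ) : ℂ) • M φ := map_smul M _ _
      rw [hM, inner_smul_left, inner_smul_right, Complex.conj_ofReal]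
      rw [norm_mul, norm_mul, Complex.norm_real, Real.norm_eq_abs, abs_of_pos (by positivity : (0:ℝ) < ‖φ‖⁻¹)]
      calc ‖φ‖⁻¹ * (‖φ‖⁻¹ * ‖⟪φ, M φ⟫‖)
          < ‖φ‖⁻¹ * (‖φ‖⁻¹ * (ε * ‖φ‖ ^ 2)) := by
            apply mul_lt_mul_of_pos_left
            apply mul_lt_mul_of_pos_left hφ
            all_goals positivity
        _ = ε * (‖φ‖⁻¹ * ‖φ‖) ^ 2 := by ring
        _ = ε := by rw [inv_mul_cancel₀ (ne_of_gt hn)]; ring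
  choose u hu1 hu2 using fun n : ℕ => key (1 / (n + 1)) (by positivity)
  have hq : Tendsto (fun n => ⟪u n, M (u n)⟫) atTop (𝓝 0) := by
    rw [tendsto_zero_iff_norm_tendsto_zero]
    refine squeeze_zero (fun n => norm_nonneg _) (fun n => ?_)
      tendsto_one_div_add_atTop_nhds_zero_nat
    exact (hu2 n).le
  set U : Ultrafilter ℕ := Ultrafilter.of atTop with hU
  have hUle : (↑U : Filter ℕ) ≤ atTop := Ultrafilter.of_le _
  obtain ⟨φ, hφ⟩ := aux_exists_weak_limit U u hu1
  obtain ⟨ψ, hψ⟩ := aux_exists_compact_limit U hK u hu1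
  -- the weak limit also works on the left slot
  have hφ' : ∀ y : H, Tendsto (fun n => ⟪y, u n⟫) ↑U (𝓝 ⟪y, φ⟫) := by
    intro y
    have h1 := ((Complex.continuous_conj).tendsto _).comp (hφ y)
    have heq : (⇑(starRingEnd ℂ) ∘ fun n => ⟪u n, y⟫) = fun n => ⟪y, u n⟫ := by
      funext n
      exact inner_conj_symm _ _
    rw [heq] at h1
    simpa [inner_conj_symm] using h1
  -- identify ψ = K φ
  have hψK : ψ = K φ := by
    have hall : ∀ y : H, ⟪y, ψ⟫ = ⟪y, K φ⟫ := by
      intro y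
      refine tendsto_nhds_unique (tendsto_const_nhds.inner hψ) ?_
      have h1 := hφ' ((ContinuousLinearMap.adjoint K) y)
      have heq : (fun n => ⟪(ContinuousLinearMap.adjoint K) y, u n⟫)
          = fun n => ⟪y, K (u n)⟫ := by
        funext n; rw [ContinuousLinearMap.adjoint_inner_left]
      rw [heq, ContinuousLinearMap.adjoint_inner_left] at h1
      exact h1
    have h0 : ⟪ψ - K φ, ψ - K φ⟫ = 0 := by
      rw [inner_sub_right, hall (ψ - K φ), sub_self]
    rw [← sub_eq_zero]
    exact inner_self_eq_zero.mp h0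
  subst hψK
  -- quadratic form of K converges
  have hKlim : Tendsto (fun n => ⟪u n, K (u n)⟫) ↑U (𝓝 ⟪φ, K φ⟫) := by
    have hsplit : (fun n => ⟪u n, K (u n)⟫)
        = fun n => ⟪u n, K (u n) - K φ⟫ + ⟪u n, K φ⟫ := by
      funext n; rw [inner_sub_right]; ring
    rw [hsplit]
    have h1 : Tendsto (fun n => ⟪u n, K (u n) - K φ⟫) ↑U (𝓝 0) := by
      rw [tendsto_zero_iff_norm_tendsto_zero]
      refine squeeze_zero (g := fun n => ‖K (u n) - K φ‖) (fun n => norm_nonneg _)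
        (fun n => ?_) ?_
      · calc ‖⟪u n, K (u n) - K φ⟫‖ ≤ ‖u n‖ * ‖K (u n) - K φ‖ := norm_inner_le_norm _ _
          _ = ‖K (u n) - K φ‖ := by rw [hu1 n, one_mul]
      · have := (hψ.sub_const (K φ)).norm
        simpa using this
    have h2 := hφ (K φ)
    simpa using h1.add h2
  -- quadratic form of M₀ converges to -⟪φ, K φ⟫
  have hM₀lim : Tendsto (fun n => ⟪u n, M₀ (u n)⟫) ↑U (𝓝 (-⟪φ, K φ⟫)) := by
    have hsplit : (fun n => ⟪u n, M₀ (u n)⟫)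
        = fun n => ⟪u n, M (u n)⟫ - ⟪u n, K (u n)⟫ := by
      funext n; rw [hsum]; simp [inner_add_right]
    rw [hsplit]
    have := (hq.mono_left hUle).sub hKlim
    simpa using this
  -- real part: c ≤ re (-⟪φ, K φ⟫), hence φ ≠ 0
  have hre : c ≤ (-⟪φ, K φ⟫).re := by
    refine ge_of_tendsto ((Complex.continuous_re.tendsto _).comp hM₀lim)
      (Filter.Eventually.of_forall fun n => ?_)
    have := hlow (u n)
    rw [hu1 n] at this
    simpa using this
  have hφ0 : φ ≠ 0 := by
    rintro rfl
    rw [map_zero, inner_zero_right, neg_zero, Complex.zero_re] at hre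
    exact absurd hre hc.not_ge
  -- imaginary part of ⟪φ, K φ⟫ is 0
  have him : (⟪φ, K φ⟫).im = 0 := by
    have h1 : Tendsto (fun n => (⟪u n, M₀ (u n)⟫).im) ↑U (𝓝 ((-⟪φ, K φ⟫).im)) :=
      (Complex.continuous_im.tendsto _).comp hM₀lim
    have h2 : (fun n => (⟪u n, M₀ (u n)⟫).im) = fun _ => (0 : ℝ) := by
      funext n; exact aux_im_inner_self_eq_zero hsa (u n)
    rw [h2] at h1
    have h3 : (-⟪φ, K φ⟫).im = 0 := tendsto_nhds_unique h1 tendsto_const_nhds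
    simpa using h3
  -- contradiction with hIm
  apply hIm φ hφ0
  rw [hsum]
  simp [inner_add_right, aux_im_inner_self_eq_zero hsa φ, him]

end Aux

/-- If `M = M₀ + K` with `M₀` sign-definite and `K` compact, and
`Im ⟪φ, M φ⟫ ≠ 0` for every `φ ≠ 0`, then `M` is coercive and bijective with
bounded inverse. -/
theorem signDefinite_plus_compact_coercive_invertible
    {H : Type*} [NormedAddCommGroup H] [InnerProductSpace ℂ H] [CompleteSpace H]
    (M M₀ K : H →L[ℂ] H)
    (hsum : M = M₀ + K)
    (hsign : IsSignDefiniteOp M₀)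
    (hK : IsCompactOperator (⇑K))
    (hIm : ∀ φ : H, φ ≠ 0 → (⟪φ, M φ⟫).im ≠ 0) :
    (∃ c' > (0 : ℝ), ∀ φ : H, c' * ‖φ‖ ^ 2 ≤ ‖⟪φ, M φ⟫‖) ∧
      Function.Bijective M ∧ ∃ Minv : H →L[ℂ] H, Minv ∘L M = 1 ∧ M ∘L Minv = 1 := by
  have hcoer : ∃ c' > (0 : ℝ), ∀ φ : H, c' * ‖φ‖ ^ 2 ≤ ‖⟪φ, M φ⟫‖ := by
    rcases hsign with hp | hn
    · exact aux_coercive_of_pos M M₀ K hsum hp hK hIm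
    · have h1 : (-M : H →L[ℂ] H) = -M₀ + -K := by rw [hsum, neg_add]
      have h2 : IsCompactOperator (⇑(-K : H →L[ℂ] H)) := by
        have h := hK.neg
        have he : (⇑(-K : H →L[ℂ] H)) = -⇑K := by
          funext x; simp
        rwa [he]
      have h3 : ∀ φ : H, φ ≠ 0 → (⟪φ, (-M : H →L[ℂ] H) φ⟫).im ≠ 0 := by
        intro φ h0
        simp only [ContinuousLinearMap.neg_apply, inner_neg_right, Complex.neg_im, ne_eq,
          neg_eq_zero]
        exact hIm φ h0
      obtain ⟨c', hc', hle⟩ := aux_coercive_of_pos (-M) (-M₀) (-K) h1 hn h2 h3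
      refine ⟨c', hc', fun φ => ?_⟩
      have h4 := hle φ
      rwa [ContinuousLinearMap.neg_apply, inner_neg_right, norm_neg] at h4
  obtain ⟨c', hc', hle⟩ := hcoer
  have hform : ∀ x : H, ‖x‖ ^ 2 * (c'.toNNReal : ℝ) ≤ ‖⟪M x, x⟫‖ := by
    intro x
    rw [norm_inner_symm]
    calc ‖x‖ ^ 2 * (c'.toNNReal : ℝ) = c' * ‖x‖ ^ 2 := by
          rw [Real.coe_toNNReal c' hc'.le]; ring
      _ ≤ ‖⟪x, M x⟫‖ := hle x
      _ = ‖⟪x, M x⟫‖ := rfl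
  have hcpos : (0 : ℝ≥0) < c'.toNNReal := Real.toNNReal_pos.mpr hc'
  have hunit : IsUnit M := isUnit_of_forall_le_norm_inner_map M hcpos hform
  have hbij : Function.Bijective M := ContinuousLinearMap.isUnit_iff_bijective.mp hunit
  obtain ⟨v, hv⟩ := hunit
  refine ⟨⟨c', hc', hle⟩, hbij, (↑v⁻¹ : H →L[ℂ] H), ?_, ?_⟩
  · rw [← hv, ← ContinuousLinearMap.mul_def, v.inv_mul]
  · rw [← hv, ← ContinuousLinearMap.mul_def, v.mul_inv]
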